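/- Let R be a commutative ring with identity. Then R is Noetherian if and only if every prime ideal of R is finitely generated. -/

import Mathlib

/-- Cohen's theorem: a commutative ring is Noetherian iff every prime ideal
is finitely generated. -/
theorem cohen_theorem (R : Type*) [CommRing R] :
    IsNoetherianRing R ↔ ∀ P : Ideal R, P.IsPrime → P.FG := by
  constructor
  · intro h P _
    exact (isNoetherianRing_iff_ideal_fg R).mp h P
  · intro hprime
    rw [isNoetherianRing_iff_ideal_fg]
    by_contra hnot
    push_neg at hnot
    obtain ⟨I, hI⟩ := hnot
    obtain ⟨M, -, hMS, hMmax⟩ := zorn_le_nonempty₀ {J : Ideal R | ¬ J.FG}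
      (fun c hcS hc y hy => by
        refine ⟨sSup c, ?_, fun z hz => le_sSup hz⟩
        intro hfg
        obtain ⟨b, hbc, hble⟩ :=
          (CompleteLattice.isCompactElement_iff_le_of_directed_sSup_le _ _).mp
            ((Submodule.fg_iff_compact _).mp hfg) c ⟨y, hy⟩
            (IsChain.directedOn hc) le_rfl
        exact hcS hbc (le_antisymm hble (le_sSup hbc) ▸ hfg)) I hI
    -- M is a maximal non-finitely-generated ideal; show M is prime.
    apply hMS
    apply hprime
    constructor
    · intro htop
      exact hMS (htop ▸ ⟨{1}, by simp [Ideal.span_singleton_one]⟩)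
    · intro a b hab
      by_contra h
      push_neg at h
      obtain ⟨ha, hb⟩ := h
      set J : Ideal R := M ⊔ Ideal.span {a} with hJ
      have hJfg : J.FG := by
        by_contra hJnfg
        exact ha (hMmax hJnfg le_sup_left (Ideal.mem_sup_right (Ideal.mem_span_singleton_self a)))
      set K : Ideal R := M.colon (Ideal.span {a}) with hK
      have hMK : M ≤ K := fun m hm => Ideal.mem_colon_span_singleton.mpr (M.mul_mem_right a hm)
      have hbK : b ∈ K := Ideal.mem_colon_span_singleton.mpr (by rwa [mul_comm] at hab)
      have hKfg : K.FG := by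
        by_contra hKnfg
        exact hb (hMmax hKnfg hMK hbK)
      obtain ⟨T, hT⟩ := hJfg
      have hdecomp : ∀ t ∈ T, ∃ m r : R, m ∈ M ∧ t = m + r * a := by
        intro t ht
        have : t ∈ J := hT ▸ Ideal.subset_span ht
        rw [hJ, Submodule.mem_sup] at this
        obtain ⟨m, hm, z, hz, hmz⟩ := this
        rw [Ideal.mem_span_singleton'] at hz
        obtain ⟨r, hr⟩ := hz
        exact ⟨m, r, hm, by rw [← hmz, hr]⟩
      classical
      choose! μ ρ hμ hμρ using hdecomp
      set N : Ideal R := Ideal.span ↑(T.image μ) with hN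
      have hNM : N ≤ M := by
        rw [hN, Ideal.span_le]
        rintro x hx
        simp only [Finset.coe_image, Set.mem_image, Finset.mem_coe] at hx
        obtain ⟨t, ht, rfl⟩ := hx
        exact hμ t ht
      have haKM : Ideal.span {a} * K ≤ M := by
        rw [Ideal.mul_le]
        intro r hr s hs
        rw [Ideal.mem_span_singleton'] at hr
        obtain ⟨c, rfl⟩ := hr
        have hsa := Ideal.mem_colon_span_singleton.mp hs
        have : c * a * s = c * (s * a) := by ring
        rw [this]
        exact M.mul_mem_left c hsa
      have hMeq : M = N ⊔ Ideal.span {a} * K := by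
        apply le_antisymm
        · intro x hx
          have hxJ : x ∈ Ideal.span (↑T : Set R) := hT.symm ▸ le_sup_left (a := M) (b := Ideal.span {a}) hx
          rw [← Ideal.submodule_span_eq, Submodule.mem_span_finset] at hxJ
          obtain ⟨f, -, hf⟩ := hxJ
          have hx' : x = (∑ t ∈ T, f t * μ t) + (∑ t ∈ T, f t * ρ t) * a := by
            rw [Finset.sum_mul, ← Finset.sum_add_distrib, ← hf]
            apply Finset.sum_congr rfl
            intro t ht
            have h1 := hμρ t ht
            calc f t • t = f t * (μ t + ρ t * a) := by rw [smul_eq_mul, ← h1]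
              _ = f t * μ t + f t * ρ t * a := by ring
          have hsum_mem : (∑ t ∈ T, f t * μ t) ∈ N := by
            apply Ideal.sum_mem
            intro t ht
            exact Ideal.mul_mem_left _ _ (Ideal.subset_span (by
              simp only [Finset.coe_image, Set.mem_image, Finset.mem_coe]
              exact ⟨t, ht, rfl⟩))
          have hr_mem : (∑ t ∈ T, f t * ρ t) ∈ K := by
            rw [Ideal.mem_colon_span_singleton]
            have : (∑ t ∈ T, f t * ρ t) * a = x - ∑ t ∈ T, f t * μ t := by
              rw [hx']; ring
            rw [this]
            exact M.sub_mem hx (hNM hsum_mem)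
          have : (∑ t ∈ T, f t * ρ t) * a ∈ Ideal.span {a} * K := by
            rw [mul_comm (∑ t ∈ T, f t * ρ t) a]
            exact Ideal.mul_mem_mul (Ideal.mem_span_singleton_self a) hr_mem
          rw [hx']
          exact Submodule.add_mem _ (Ideal.mem_sup_left hsum_mem) (Ideal.mem_sup_right this)
        · exact sup_le hNM haKM
      apply hMS
      rw [hMeq]
      exact Submodule.FG.sup ⟨T.image μ, rfl⟩ (Submodule.FG.mul ⟨{a}, by simp only [Finset.coe_singleton]⟩ hKfg)
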